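/- Let f : [a,b] → ℝ be continuous and integrable on [a,b] with 0 ≤ a < b, and suppose f is quasi-convex on [a,b]. Then for any fixed p, q > 0, ∫_a^b (x-a)^p (b-x)^q f(x) dx ≤ (b-a)^{p+q+1} max{f(a), f(b)} β(p+1, q+1). -/
import Mathlib


open Real Set MeasureTheory intervalIntegral

noncomputable def beta (x y : ℝ) : ℝ := ∫ t in (0:ℝ)..1, t ^ (x-1) * (1-t) ^ (y-1)

def QuasiConvexOn' (s : Set ℝ) (g : ℝ → ℝ) : Prop :=
  ∀ x ∈ s, ∀ y ∈ s, ∀ lam ∈ Set.Icc (0:ℝ) 1, g (lam*x + (1-lam)*y) ≤ max (g x) (g y)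

theorem stmt16 (a b p q : ℝ) (f : ℝ → ℝ)
    (ha : 0 ≤ a) (hab : a < b) (hp : 0 < p) (hq : 0 < q)
    (hcont : ContinuousOn f (Set.Icc a b))
    (hint : IntervalIntegrable f volume a b)
    (hf : QuasiConvexOn' (Set.Icc a b) f) :
    ∫ x in a..b, (x-a)^p * (b-x)^q * f x
      ≤ (b-a)^(p+q+1) * max (f a) (f b) * beta (p+1) (q+1) := by
  set M := max (f a) (f b) with hM
  have hba : (0:ℝ) < b - a := sub_pos.mpr hab
  -- pointwise bound f x ≤ M on [a,b]
  have hbound : ∀ x ∈ Icc a b, f x ≤ M := by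
    intro x hx
    obtain ⟨hx1, hx2⟩ := hx
    have hlam : (b - x) / (b - a) ∈ Icc (0:ℝ) 1 := by
      constructor
      · exact div_nonneg (by linarith) hba.le
      · rw [div_le_one hba]; linarith
    have := hf a ⟨le_refl a, hab.le⟩ b ⟨hab.le, le_refl b⟩ _ hlam
    have hx' : (b - x) / (b - a) * a + (1 - (b - x) / (b - a)) * b = x := by
      field_simp
      ring
    rwa [hx'] at this
  -- continuity of the weight
  have hcw : Continuous (fun x : ℝ => (x - a) ^ p * (b - x) ^ q) := by
    apply Continuous.mul
    · exact (continuous_id.sub continuous_const).rpow_const (fun x => Or.inr hp.le)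
    · exact (continuous_const.sub continuous_id).rpow_const (fun x => Or.inr hq.le)
  have hIcc : uIcc a b = Icc a b := uIcc_of_le hab.le
  have hint1 : IntervalIntegrable (fun x => (x - a) ^ p * (b - x) ^ q * f x) volume a b := by
    apply ContinuousOn.intervalIntegrable
    rw [hIcc]
    exact (hcw.continuousOn).mul hcont
  have hint2 : IntervalIntegrable (fun x => (x - a) ^ p * (b - x) ^ q * M) volume a b :=
    (hcw.mul continuous_const).intervalIntegrable a b
  -- step 1: monotonicity
  have step1 : ∫ x in a..b, (x - a) ^ p * (b - x) ^ q * f x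
      ≤ ∫ x in a..b, (x - a) ^ p * (b - x) ^ q * M := by
    apply intervalIntegral.integral_mono_on hab.le hint1 hint2
    intro x hx
    have hw : 0 ≤ (x - a) ^ p * (b - x) ^ q :=
      mul_nonneg (rpow_nonneg (by linarith [hx.1]) p) (rpow_nonneg (by linarith [hx.2]) q)
    exact mul_le_mul_of_nonneg_left (hbound x hx) hw
  -- step 2: compute the weight integral
  have key : ∫ x in a..b, (x - a) ^ p * (b - x) ^ q
      = (b - a) ^ (p + q + 1) * beta (p + 1) (q + 1) := by
    have hsub := intervalIntegral.integral_comp_mul_add (a := 0) (b := 1)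
      (fun x => (x - a) ^ p * (b - x) ^ q) (ne_of_gt hba) a
    simp only [mul_zero, zero_add, mul_one, sub_add_cancel, smul_eq_mul] at hsub
    have hLHS : ∫ t in (0:ℝ)..1, ((b - a) * t + a - a) ^ p * (b - ((b - a) * t + a)) ^ q
        = (b - a) ^ (p + q) * beta (p + 1) (q + 1) := by
      have congr1 : ∀ t ∈ uIcc (0:ℝ) 1,
          ((b - a) * t + a - a) ^ p * (b - ((b - a) * t + a)) ^ q
          = (b - a) ^ (p + q) * (t ^ p * (1 - t) ^ q) := by
        intro t ht
        rw [uIcc_of_le (by norm_num : (0:ℝ) ≤ 1)] at ht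
        have h1 : (b - a) * t + a - a = (b - a) * t := by ring
        have h2 : b - ((b - a) * t + a) = (b - a) * (1 - t) := by ring
        rw [h1, h2, Real.mul_rpow hba.le ht.1, Real.mul_rpow hba.le (by linarith [ht.2]),
          Real.rpow_add hba]
        ring
      rw [intervalIntegral.integral_congr congr1, intervalIntegral.integral_const_mul]
      congr 1
      unfold beta
      norm_num
    rw [hLHS] at hsub
    have : (b - a) * ((b - a) ^ (p + q) * beta (p + 1) (q + 1))
        = (b - a) ^ (p + q + 1) * beta (p + 1) (q + 1) := by
      rw [Real.rpow_add hba (p+q) 1, Real.rpow_one, Real.rpow_add hba]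
      ring
    rw [← this, hsub]
    field_simp
  calc ∫ x in a..b, (x - a) ^ p * (b - x) ^ q * f x
      ≤ ∫ x in a..b, (x - a) ^ p * (b - x) ^ q * M := step1
    _ = (∫ x in a..b, (x - a) ^ p * (b - x) ^ q) * M := by
        rw [← intervalIntegral.integral_mul_const]
    _ = (b - a) ^ (p + q + 1) * M * beta (p + 1) (q + 1) := by rw [key]; ring
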